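/- Let C be a finite inverse strict category (with an explicit rank functor to (ℕˢ)^op creating identities and a finite type of objects). Then every Reedy fibrant diagram X : C → U has a fibrant limit: its strict limit is strictly isomorphic to a fibrant type. -/

import Mathlib

universe u

/-- A two-level type theory, presented over the strict layer of Lean types (where
strict equality is `Eq`, which satisfies UIP and function extensionality): a class of
fibrant types closed under unit, Σ and Π, together with a fibrant (intensional)
equality type on fibrant types, with path induction `J` into fibrant families and its
computation rule. -/
structure TLTT where
  /-- Fibrancy predicate: the fibrant types among the strict types. -/
  Fib : Type u → Prop
  fib_unit : Fib PUnit
  fib_sigma : ∀ {A : Type u} {B : A → Type u},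
      Fib A → (∀ a, Fib (B a)) → Fib (Σ a, B a)
  fib_pi : ∀ {A : Type u} {B : A → Type u},
      Fib A → (∀ a, Fib (B a)) → Fib (∀ a, B a)
  /-- The fibrant (intensional) equality type. -/
  Id : ∀ {A : Type u}, A → A → Type u
  idrefl : ∀ {A : Type u} (a : A), Id a a
  fib_id : ∀ {A : Type u}, Fib A → ∀ a b : A, Fib (Id a b)
  /-- Path induction, eliminating into fibrant families. -/
  J : ∀ {A : Type u} (a : A) (P : ∀ b : A, Id a b → Type u),
      (∀ b p, Fib (P b p)) → P a (idrefl a) → ∀ (b : A) (p : Id a b), P b p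
  J_refl : ∀ {A : Type u} (a : A) (P : ∀ b : A, Id a b → Type u)
      (hP : ∀ b p, Fib (P b p)) (d : P a (idrefl a)), J a P hP d a (idrefl a) = d

/-- A map is an equivalence (of fibrant types) if it has a right inverse and a left
inverse up to fibrant equality. -/
def IsEquivT (T : TLTT.{u}) {A B : Type u} (f : A → B) : Type u :=
  ((g : B → A) ×' ∀ b, T.Id (f (g b)) b) × ((h : B → A) ×' ∀ a, T.Id (h (f a)) a)

/-- A map `p : E → B` is a fibration if its strict fibres are strictly isomorphic to the
values of a fibrant type family over `B`. -/
def IsFibrationT (T : TLTT.{u}) {E B : Type u} (p : E → B) : Prop :=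
  ∃ F : B → Type u, (∀ b, T.Fib (F b)) ∧ ∀ b, Nonempty (F b ≃ { e : E // p e = b })

/-- A strict category: objects, hom-types, identities and composition, with the
categorical laws holding up to strict equality. -/
structure SCat where
  Obj : Type u
  Hom : Obj → Obj → Type u
  id : ∀ x, Hom x x
  comp : ∀ {x y z : Obj}, Hom y z → Hom x y → Hom x z
  id_comp : ∀ {x y : Obj} (f : Hom x y), comp (id y) f = f
  comp_id : ∀ {x y : Obj} (f : Hom x y), comp f (id x) = f
  assoc : ∀ {x y z w : Obj} (h : Hom z w) (g : Hom y z) (f : Hom x y),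
      comp h (comp g f) = comp (comp h g) f

/-- A strict functor from a strict category to the universe of strict types,
strictly preserving identities and composition. -/
structure SFunctor (C : SCat.{u}) where
  obj : C.Obj → Type u
  map : ∀ {x y : C.Obj}, C.Hom x y → obj x → obj y
  map_id : ∀ (x : C.Obj) (a : obj x), map (C.id x) a = a
  map_comp : ∀ {x y z : C.Obj} (g : C.Hom y z) (f : C.Hom x y) (a : obj x),
      map (C.comp g f) a = map g (map f a)

/-- The strict limit of a diagram of strict types: the type of natural transformations
from the constant functor at the unit type, i.e. compatible families of elements. -/
def SLimit {C : SCat.{u}} (X : SFunctor C) : Type u :=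
  { c : ∀ y : C.Obj, X.obj y // ∀ (x y : C.Obj) (f : C.Hom x y), X.map f (c x) = c y }

/-- An object of the reduced coslice `z ⫽ C`: an object with a non-identity map from `z`. -/
structure RCObj (C : SCat.{u}) (z : C.Obj) where
  y : C.Obj
  f : C.Hom z y
  nonid : ∀ _ : z = y, ¬ HEq f (C.id z)

/-- The matching object of a diagram `X` at `z`: the strict limit of `X` restricted
along the forgetful functor from the reduced coslice `z ⫽ C`. -/
def Matching {C : SCat.{u}} (X : SFunctor C) (z : C.Obj) : Type u :=
  { c : ∀ o : RCObj C z, X.obj o.y //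
    ∀ (o o' : RCObj C z) (h : C.Hom o.y o'.y), C.comp h o.f = o'.f →
      X.map h (c o) = c o' }

/-- The canonical map from `X z` to the matching object at `z`. -/
def matchMap {C : SCat.{u}} (X : SFunctor C) (z : C.Obj) :
    X.obj z → Matching X z :=
  fun a => ⟨fun o => X.map o.f a, by
    intro o o' h hh
    rw [← X.map_comp, hh]⟩

/-- A diagram over an inverse category is Reedy fibrant if each canonical map to the
matching object is a fibration. -/
def ReedyFibrant (T : TLTT.{u}) {C : SCat.{u}} (X : SFunctor C) : Prop :=
  ∀ z : C.Obj, IsFibrationT T (matchMap X z)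

/-- An inverse structure on a strict category: a rank functor to `(ℕˢ)ᵒᵖ` which
creates identities. -/
structure IsInverse (C : SCat.{u}) where
  rank : C.Obj → ℕ
  rank_le : ∀ {x y : C.Obj}, C.Hom x y → rank y ≤ rank x
  createsId : ∀ {x y : C.Obj} (f : C.Hom x y), rank x = rank y →
      ∃ _ : x = y, HEq f (C.id x)

/-- Strict finite ordinals. -/
def SFin : ℕ → Type u
  | 0 => PEmpty
  | n + 1 => PUnit ⊕ SFin n

namespace FIRFLAux

/-- `SFin n` is equivalent to `Fin n`. -/
def sfinEquiv : ∀ n : ℕ, SFin.{u} n ≃ Fin n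
  | 0 => Equiv.equivOfIsEmpty PEmpty.{u+1} (Fin 0)
  | n + 1 =>
    (Equiv.sumCongr (Equiv.ofUnique PUnit.{u+1} (Fin 1)) (sfinEquiv n)).trans
      (finSumFinEquiv.trans (finCongr (Nat.add_comm 1 n)))

/-- Full subcategory of a strict category on a predicate. -/
def rcat (C : SCat.{u}) (P : C.Obj → Prop) : SCat.{u} where
  Obj := {x : C.Obj // P x}
  Hom a b := C.Hom a.1 b.1
  id a := C.id a.1
  comp g f := C.comp g f
  id_comp f := C.id_comp f
  comp_id f := C.comp_id f
  assoc h g f := C.assoc h g f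

/-- Restriction of a diagram to a full subcategory. -/
def rfun {C : SCat.{u}} (X : SFunctor C) (P : C.Obj → Prop) : SFunctor (rcat C P) where
  obj a := X.obj a.1
  map f a := X.map f a
  map_id x a := X.map_id x.1 a
  map_comp g f a := X.map_comp g f a

/-- Restriction of an inverse structure to a full subcategory. -/
def rinv {C : SCat.{u}} (inv : IsInverse C) (P : C.Obj → Prop) : IsInverse (rcat C P) where
  rank x := inv.rank x.1
  rank_le f := inv.rank_le f
  createsId f h := by
    obtain ⟨h1, h2⟩ := inv.createsId f h
    exact ⟨Subtype.ext h1, h2⟩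

/-- The reduced coslice of a full subcategory closed under targets agrees with
the reduced coslice in the large category. -/
def rcEquiv {C : SCat.{u}} (P : C.Obj → Prop)
    (hcl : ∀ {x y : C.Obj}, P x → C.Hom x y → P y)
    (w : (rcat C P).Obj) : RCObj (rcat C P) w ≃ RCObj C w.1 where
  toFun o := ⟨o.y.1, o.f, fun h hf => o.nonid (Subtype.ext h) hf⟩
  invFun o := ⟨⟨o.y, hcl w.2 o.f⟩, o.f, fun h hf => o.nonid (congrArg Subtype.val h) hf⟩
  left_inv o := rfl
  right_inv o := rfl

/-- Matching objects of the restricted diagram agree with the original ones. -/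
def matchingEquiv {C : SCat.{u}} (X : SFunctor C) (P : C.Obj → Prop)
    (hcl : ∀ {x y : C.Obj}, P x → C.Hom x y → P y)
    (w : (rcat C P).Obj) : Matching X w.1 ≃ Matching (rfun X P) w where
  toFun c := ⟨fun o => c.1 (rcEquiv P hcl w o),
    fun o o' h hh => c.2 (rcEquiv P hcl w o) (rcEquiv P hcl w o') h hh⟩
  invFun c := ⟨fun o => c.1 ((rcEquiv P hcl w).symm o),
    fun o o' h hh => c.2 ((rcEquiv P hcl w).symm o) ((rcEquiv P hcl w).symm o') h hh⟩
  left_inv c := rfl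
  right_inv c := rfl

/-- Reedy fibrancy is preserved by restriction to a target-closed full subcategory. -/
theorem reedy_restrict (T : TLTT.{u}) {C : SCat.{u}} (X : SFunctor C) (P : C.Obj → Prop)
    (hcl : ∀ {x y : C.Obj}, P x → C.Hom x y → P y)
    (hR : ReedyFibrant T X) : ReedyFibrant T (rfun X P) := by
  intro w
  obtain ⟨F, hF, hfe⟩ := hR w.1
  refine ⟨fun b => F ((matchingEquiv X P hcl w).symm b), fun b => hF _, fun b => ?_⟩
  obtain ⟨g⟩ := hfe ((matchingEquiv X P hcl w).symm b)
  exact ⟨g.trans (Equiv.subtypeEquiv (Equiv.refl _) fun a =>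
    (Equiv.eq_symm_apply (matchingEquiv X P hcl w)))⟩


section Decomp

variable {C : SCat.{u}} (X : SFunctor C) (z : C.Obj)

/-- The canonical map from the limit of the restricted diagram to
the matching object at `z`. -/
def muMap (hne : ∀ o : RCObj C z, o.y ≠ z)
    (c : SLimit (rfun X fun x => x ≠ z)) : Matching X z :=
  ⟨fun o => c.1 ⟨o.y, hne o⟩,
   fun o o' h _ => c.2 ⟨o.y, hne o⟩ ⟨o'.y, hne o'⟩ h⟩

/-- Forward direction of the decomposition. -/
def decompFwd (hne : ∀ o : RCObj C z, o.y ≠ z) (s : SLimit X) :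
    Σ c : SLimit (rfun X fun x => x ≠ z), {a : X.obj z // matchMap X z a = muMap X z hne c} :=
  ⟨⟨fun x => s.1 x.1, fun x y f => s.2 x.1 y.1 f⟩, s.1 z,
    Subtype.ext (funext fun o => s.2 z o.y o.f)⟩

/-- Backward direction of the decomposition, as a family of elements. -/
noncomputable def decompBwdFun (hne : ∀ o : RCObj C z, o.y ≠ z)
    (t : Σ c : SLimit (rfun X fun x => x ≠ z), {a : X.obj z // matchMap X z a = muMap X z hne c})
    (x : C.Obj) : X.obj x :=
  @dite (X.obj x) (x = z) (Classical.propDecidable _)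
    (fun hx => cast (congrArg X.obj hx.symm) t.2.1)
    (fun hx => t.1.1 ⟨x, hx⟩)

theorem decompBwd_compat (hne : ∀ o : RCObj C z, o.y ≠ z)
    (hinto : ∀ {x : C.Obj} (f : C.Hom x z), ∃ _ : x = z, HEq f (C.id x))
    (t : Σ c : SLimit (rfun X fun x => x ≠ z), {a : X.obj z // matchMap X z a = muMap X z hne c})
    (x y : C.Obj) (f : C.Hom x y) :
    X.map f (decompBwdFun X z hne t x) = decompBwdFun X z hne t y := by
  unfold decompBwdFun
  by_cases hx : x = z
  · subst hx
    by_cases hy : y = x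
    · subst hy
      obtain ⟨-, h2⟩ := hinto f
      rw [eq_of_heq h2, X.map_id]
    · erw [dif_pos rfl, dif_neg hy, cast_eq]
      exact congrFun (congrArg Subtype.val t.2.2) ⟨y, f, fun h' _ => absurd h'.symm hy⟩
  · by_cases hy : y = z
    · subst hy
      obtain ⟨h1, -⟩ := hinto f
      exact absurd h1 hx
    · erw [dif_neg hx, dif_neg hy]
      exact t.1.2 ⟨x, hx⟩ ⟨y, hy⟩ f

/-- The decomposition of the limit as a sigma over the restricted limit of the
fibre of the matching map. -/
noncomputable def decompEquiv (hne : ∀ o : RCObj C z, o.y ≠ z)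
    (hinto : ∀ {x : C.Obj} (f : C.Hom x z), ∃ _ : x = z, HEq f (C.id x)) :
    SLimit X ≃ Σ c : SLimit (rfun X fun x => x ≠ z),
      {a : X.obj z // matchMap X z a = muMap X z hne c} where
  toFun := decompFwd X z hne
  invFun t := ⟨decompBwdFun X z hne t, decompBwd_compat X z hne @hinto t⟩
  left_inv s := by
    apply Subtype.ext
    funext x
    show decompBwdFun X z hne (decompFwd X z hne s) x = s.1 x
    unfold decompBwdFun
    by_cases hx : x = z
    · subst hx
      erw [dif_pos rfl, cast_eq]
      exact rfl
    · erw [dif_neg hx]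
      exact rfl
  right_inv t := by
    obtain ⟨c, a, h⟩ := t
    have hc : (decompFwd X z hne ⟨decompBwdFun X z hne ⟨c, a, h⟩,
        decompBwd_compat X z hne @hinto ⟨c, a, h⟩⟩).1 = c := by
      apply Subtype.ext
      funext x
      show decompBwdFun X z hne ⟨c, a, h⟩ x.1 = c.1 x
      unfold decompBwdFun
      erw [dif_neg x.2]
      exact rfl
    refine Sigma.ext hc ?_
    refine (Subtype.heq_iff_coe_eq fun a' => by rw [hc]).mpr ?_
    show decompBwdFun X z hne ⟨c, a, h⟩ z = a
    unfold decompBwdFun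
    erw [dif_pos rfl, cast_eq]

end Decomp


/-- The main induction: over a category with exactly `n` objects, every Reedy fibrant
diagram has a fibrant limit. -/
theorem aux (T : TLTT.{u}) : ∀ (n : ℕ) (C : SCat.{u}) (inv : IsInverse C)
    (e : C.Obj ≃ SFin.{u} n) (X : SFunctor C) (_hX : ∀ z : C.Obj, T.Fib (X.obj z))
    (hR : ReedyFibrant T X), ∃ B : Type u, T.Fib B ∧ Nonempty (SLimit X ≃ B) := by
  intro n
  induction n with
  | zero =>
    intro C inv e X hX hR
    refine ⟨PUnit, T.fib_unit,
      ⟨⟨fun _ => PUnit.unit, fun _ => ⟨fun y => (e y).elim, fun x _ _ => (e x).elim⟩,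
        fun s => Subtype.ext (funext fun y => (e y).elim), fun _ => rfl⟩⟩⟩
  | succ n ih =>
    intro C inv e X hX hR
    classical
    haveI : Fintype C.Obj := Fintype.ofEquiv _ (e.trans (sfinEquiv.{u} (n + 1))).symm
    haveI : Nonempty C.Obj := ⟨(e.trans (sfinEquiv.{u} (n + 1))).symm 0⟩
    obtain ⟨z, hmax⟩ := Finite.exists_max inv.rank
    -- no non-identity maps into `z`
    have hinto : ∀ {x : C.Obj} (f : C.Hom x z), ∃ _ : x = z, HEq f (C.id x) :=
      fun {x} f => inv.createsId f (le_antisymm (hmax x) (inv.rank_le f))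
    have hne : ∀ o : RCObj C z, o.y ≠ z := by
      intro o hyz
      obtain ⟨h1, h2⟩ := inv.createsId o.f (by rw [hyz])
      exact o.nonid h1 h2
    have hcl : ∀ {x y : C.Obj}, x ≠ z → C.Hom x y → y ≠ z := by
      intro x y hx f hy
      subst hy
      obtain ⟨h1, -⟩ := hinto f
      exact hx h1
    -- the restricted category has `n` objects
    have hcobj : Fintype.card C.Obj = n + 1 :=
      (Fintype.card_congr (e.trans (sfinEquiv.{u} (n + 1)))).trans (Fintype.card_fin _)
    have hsub : Fintype.card {x : C.Obj // x ≠ z} = n := by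
      have h1 := Fintype.card_subtype_compl (fun x : C.Obj => x = z)
      rw [Fintype.card_subtype_eq, hcobj] at h1
      simpa using h1
    have e'' : {x : C.Obj // x ≠ z} ≃ SFin.{u} n :=
      (Fintype.equivOfCardEq (by rw [hsub, Fintype.card_fin])).trans (sfinEquiv.{u} n).symm
    -- induction hypothesis applied to the restricted diagram
    obtain ⟨B', hB', ⟨e'⟩⟩ := ih (rcat C fun x => x ≠ z) (rinv inv _) e''
      (rfun X fun x => x ≠ z) (fun w => hX w.1) (reedy_restrict T X _ @hcl hR)
    -- the fibration structure on the matching map at `z`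
    obtain ⟨F, hF, hfe⟩ := hR z
    refine ⟨Σ b : B', F (muMap X z hne (e'.symm b)),
      T.fib_sigma hB' fun b => hF _, ?_⟩
    have E2 : (Σ c : SLimit (rfun X fun x => x ≠ z),
        {a : X.obj z // matchMap X z a = muMap X z hne c}) ≃
        Σ c : SLimit (rfun X fun x => x ≠ z), F (muMap X z hne c) :=
      Equiv.sigmaCongrRight fun c => (Classical.choice (hfe (muMap X z hne c))).symm
    have E3 : (Σ c : SLimit (rfun X fun x => x ≠ z), F (muMap X z hne c)) ≃
        Σ b : B', F (muMap X z hne (e'.symm b)) :=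
      (Equiv.sigmaCongrLeft
        (β := fun c => F (muMap X z hne c)) e'.symm).symm
    exact ⟨((decompEquiv X z hne @hinto).trans E2).trans E3⟩

end FIRFLAux

/-- Every Reedy fibrant diagram over a finite inverse strict category has a fibrant
limit: its strict limit is strictly isomorphic to a fibrant type. -/
theorem finite_inverse_reedy_fibrant_limit (T : TLTT.{u}) (C : SCat.{u})
    (inv : IsInverse C) (hfin : ∃ n : ℕ, Nonempty (C.Obj ≃ SFin.{u} n))
    (X : SFunctor C) (hX : ∀ z : C.Obj, T.Fib (X.obj z)) (hR : ReedyFibrant T X) :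
    ∃ B : Type u, T.Fib B ∧ Nonempty (SLimit X ≃ B) := by
  obtain ⟨n, ⟨e⟩⟩ := hfin
  exact FIRFLAux.aux T n C inv e X hX hR
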